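/- For every set C ∈ E there exist a strictly increasing sequence 0 = k₀ < k₁ < k₂ < ⋯ of natural numbers and sets φ(n) ⊆ 2^{[k_n, k_{n+1})} with |φ(n)| · 2^{-(k_{n+1} - k_n)} ≤ 4^{-n} for every n, such that C ⊆ {x ∈ 2^ω : x↾[k_n, k_{n+1}) ∈ φ(n) for all but finitely many n}. -/

import Mathlib

open MeasureTheory Set Filter Cardinal

/-- `μ` is the uniform product ("fair coin") probability measure on Cantor space `2^ω`,
characterized by its values on cylinders. -/
def IsFairCoin (μ : Measure (ℕ → Bool)) : Prop :=
  ∀ (s : Finset ℕ) (σ : ℕ → Bool),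
    μ {x : ℕ → Bool | ∀ i ∈ s, x i = σ i} = (1 / 2 : ENNReal) ^ s.card

/-- The σ-ideal of μ-null sets. -/
def nullIdeal (μ : Measure (ℕ → Bool)) : Set (Set (ℕ → Bool)) := {A | μ A = 0}

/-- The σ-ideal of meager subsets of Cantor space. -/
def meagerIdeal : Set (Set (ℕ → Bool)) := {A | IsMeagre A}

/-- The σ-ideal generated by closed measure zero sets. -/
def closedNullIdeal (μ : Measure (ℕ → Bool)) : Set (Set (ℕ → Bool)) :=
  {A | ∃ F : ℕ → Set (ℕ → Bool), (∀ n, IsClosed (F n) ∧ μ (F n) = 0) ∧ A ⊆ ⋃ n, F n}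

/-- `add(I, J)`: the least cardinality of a subfamily of `I` whose union is not in `J`. -/
noncomputable def addIJ (I J : Set (Set (ℕ → Bool))) : Cardinal :=
  sInf {c : Cardinal | ∃ A : Set (Set (ℕ → Bool)), A ⊆ I ∧ ⋃₀ A ∉ J ∧ c = #A}

/-- `cov(J)`: the least cardinality of a subfamily of `J` covering the whole space. -/
noncomputable def covI (J : Set (Set (ℕ → Bool))) : Cardinal :=
  sInf {c : Cardinal | ∃ A : Set (Set (ℕ → Bool)), A ⊆ J ∧ ⋃₀ A = Set.univ ∧ c = #A}

/-- `unif(J)`: the least cardinality of a set of reals not in `J`. -/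
noncomputable def unifI (J : Set (Set (ℕ → Bool))) : Cardinal :=
  sInf {c : Cardinal | ∃ X : Set (ℕ → Bool), X ∉ J ∧ c = #X}

/-- `cof(I, J)`: the least cardinality of a subfamily of `J` cofinal over `I`. -/
noncomputable def cofIJ (I J : Set (Set (ℕ → Bool))) : Cardinal :=
  sInf {c : Cardinal | ∃ A : Set (Set (ℕ → Bool)), A ⊆ J ∧
    (∀ B ∈ I, ∃ C ∈ A, B ⊆ C) ∧ c = #A}

/-- The dominating number 𝔡. -/
noncomputable def frakD : Cardinal :=
  sInf {c : Cardinal | ∃ F : Set (ℕ → ℕ),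
    (∀ g : ℕ → ℕ, ∃ f ∈ F, ∀ᶠ n in atTop, g n ≤ f n) ∧ c = #F}

/-- The unbounding number 𝔟. -/
noncomputable def frakB : Cardinal :=
  sInf {c : Cardinal | ∃ F : Set (ℕ → ℕ),
    (∀ g : ℕ → ℕ, ∃ f ∈ F, ¬ ∀ᶠ n in atTop, f n ≤ g n) ∧ c = #F}

open Topology
lemma cylMeasurable (s : Finset ℕ) (t : ↥s → Bool) :
    MeasurableSet {x : ℕ → Bool | (fun i : s => x i.1) = t} := by
  have h : {x : ℕ → Bool | (fun i : s => x i.1) = t}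
      = (fun x : ℕ → Bool => fun i : s => x i.1) ⁻¹' {t} := by
    ext x; simp
  rw [h]
  exact (measurable_pi_lambda _ fun i => measurable_pi_apply i.1) (measurableSet_singleton t)

lemma cylMeasure (μ : Measure (ℕ → Bool)) (hμ : IsFairCoin μ) (s : Finset ℕ)
    (t : ↥s → Bool) :
    μ {x : ℕ → Bool | (fun i : s => x i.1) = t} = (1/2 : ENNReal) ^ s.card := by
  classical
  have h : {x : ℕ → Bool | (fun i : s => x i.1) = t}
      = {x : ℕ → Bool | ∀ i ∈ s, x i = (fun j => if h : j ∈ s then t ⟨j, h⟩ else false) i} := by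
    ext x
    simp only [Set.mem_setOf_eq]
    constructor
    · rintro rfl i hi; simp [hi]
    · intro h; funext i
      have := h i.1 i.2
      simpa [i.2] using this
  rw [h, hμ]

lemma closedNull_cover (μ : Measure (ℕ → Bool)) (hμ : IsFairCoin μ)
    (F : Set (ℕ → Bool)) (hFc : IsClosed F) (hF0 : μ F = 0) (k e : ℕ) :
    ∀ᶠ l in atTop, ∃ φ : Finset (↥(Finset.Ico k l) → Bool),
      (F ⊆ {x | (fun i : ↥(Finset.Ico k l) => x i.1) ∈ φ}) ∧
      φ.card * 2 ^ e ≤ 2 ^ (l - k) := by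
  classical
  set res : ∀ l : ℕ, (ℕ → Bool) → (↥(Finset.range l) → Bool) :=
    fun l x i => x i.1 with hres
  set T : ∀ l : ℕ, Finset (↥(Finset.range l) → Bool) :=
    fun l => (Set.toFinite (res l '' F)).toFinset with hT
  set Cs : ℕ → Set (ℕ → Bool) := fun l => res l ⁻¹' (res l '' F) with hCs
  have hmemC : ∀ l x, x ∈ Cs l ↔ ∃ y ∈ F, ∀ i < l, x i = y i := by
    intro l x
    constructor
    · rintro ⟨y, hyF, hxy⟩
      exact ⟨y, hyF, fun i hi => (congrFun hxy ⟨i, Finset.mem_range.2 hi⟩).symm⟩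
    · rintro ⟨y, hyF, h⟩
      exact ⟨y, hyF, funext fun i => (h i.1 (Finset.mem_range.1 i.2)).symm⟩
  have hCsUnion : ∀ l, Cs l = ⋃ t ∈ T l, {x | res l x = t} := by
    intro l; ext x
    simp only [hCs, Set.mem_preimage, Set.mem_iUnion, Set.mem_setOf_eq,
      Set.Finite.mem_toFinset, hT]
    constructor
    · intro hx; exact ⟨res l x, hx, rfl⟩
    · rintro ⟨t, ht, rfl⟩
      exact ht
  have hmeasCyl : ∀ l (t : ↥(Finset.range l) → Bool),
      MeasurableSet {x : ℕ → Bool | res l x = t} := fun l t => cylMeasurable _ t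
  have hμCs : ∀ l, μ (Cs l) = (T l).card * (1/2 : ENNReal) ^ l := by
    intro l
    rw [hCsUnion l, measure_biUnion_finset ?_ (fun t _ => hmeasCyl l t)]
    · rw [Finset.sum_congr rfl (fun t _ => cylMeasure μ hμ _ t)]
      simp [Finset.card_range, mul_comm]
    · intro t ht t' ht' htt'
      apply Set.disjoint_left.2
      intro x hx hx'
      exact htt' (hx.symm.trans hx')
  have hanti : Antitone Cs := by
    intro l l' hll' x hx
    obtain ⟨y, hyF, h⟩ := (hmemC l' x).1 hx
    exact (hmemC l x).2 ⟨y, hyF, fun i hi => h i (lt_of_lt_of_le hi hll')⟩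
  have hiInter : ⋂ l, Cs l = F := by
    apply Set.Subset.antisymm
    · intro x hx
      have hx' : ∀ l, ∃ y ∈ F, ∀ i < l, x i = y i :=
        fun l => (hmemC l x).1 (Set.mem_iInter.1 hx l)
      choose y hyF hy using hx'
      have htend : Tendsto y atTop (𝓝 x) := by
        rw [tendsto_pi_nhds]
        intro i
        apply Tendsto.congr' _ tendsto_const_nhds
        filter_upwards [eventually_gt_atTop i] with l hl
        exact (hy l i hl)
      exact hFc.mem_of_tendsto htend (Filter.Eventually.of_forall hyF)
    · intro x hx
      exact Set.mem_iInter.2 fun l => (hmemC l x).2 ⟨x, hx, fun _ _ => rfl⟩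
  have hmeasCs : ∀ l, MeasurableSet (Cs l) := by
    intro l
    rw [hCsUnion l]
    exact (T l).measurableSet_biUnion (fun t _ => hmeasCyl l t)
  have huniv : μ Set.univ = 1 := by
    have := hμ ∅ (fun _ => false)
    simpa using this
  have hfin : μ (Cs 0) ≠ ⊤ := by
    refine ne_top_of_le_ne_top ?_ (measure_mono (Set.subset_univ _))
    rw [huniv]; exact ENNReal.one_ne_top
  have htend : Tendsto (fun l => μ (Cs l)) atTop (𝓝 0) := by
    have := tendsto_measure_iInter_atTop (μ := μ)
      (fun l => (hmeasCs l).nullMeasurableSet) hanti ⟨0, hfin⟩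
    rw [hiInter, hF0] at this
    exact this
  have hpos : (0:ENNReal) < (1/2 : ENNReal) ^ (k + e) := by
    exact ENNReal.pow_pos (by norm_num) _
  have hev := htend.eventually_lt_const hpos
  filter_upwards [hev, eventually_ge_atTop (k + e + 1)] with l hl hlke
  have h12 : (1/2 : ENNReal) * 2 = 1 := by
    rw [one_div]; exact ENNReal.inv_mul_cancel (by norm_num) (by norm_num)
  set N := (T l).card with hNdef
  have h1 : (N : ENNReal) * (1/2) ^ l < (1/2) ^ (k+e) := by
    rw [← hμCs l]; exact hl
  have hh : (N : ENNReal) * (1/2)^l * 2^l < (1/2)^(k+e) * 2^l :=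
    (ENNReal.mul_lt_mul_iff_left (pow_ne_zero _ (by norm_num)) (by norm_num)).2 h1
  have hcancel : ((1:ENNReal)/2)^l * 2^l = 1 := by
    rw [← mul_pow, h12, one_pow]
  have h3 : (N : ENNReal) < (1/2)^(k+e) * 2^l := by
    calc (N:ENNReal) = N * ((1/2)^l * 2^l) := by rw [hcancel, mul_one]
    _ = N * (1/2)^l * 2^l := by ring
    _ < _ := hh
  have h2 : (N : ENNReal) < 2 ^ (l - (k+e)) := by
    calc (N:ENNReal) < (1/2)^(k+e) * 2^l := h3
    _ = (1/2)^(k+e) * (2^(k+e) * 2^(l-(k+e))) := by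
        rw [← pow_add, Nat.add_sub_cancel' (by omega : k+e ≤ l)]
    _ = (((1:ENNReal)/2)*2)^(k+e) * 2^(l-(k+e)) := by rw [mul_pow]; ring
    _ = 2^(l-(k+e)) := by rw [h12, one_pow, one_mul]
  have hN2 : N < 2^(l-(k+e)) := by exact_mod_cast h2
  have hNk : N * 2^e ≤ 2^(l-k) := by
    calc N * 2^e ≤ 2^(l-(k+e)) * 2^e := Nat.mul_le_mul_right _ (le_of_lt hN2)
    _ = 2^(l-(k+e)+e) := by rw [pow_add]
    _ = 2^(l-k) := by congr 1; omega
  refine ⟨(T l).image (fun t => fun i : ↥(Finset.Ico k l) =>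
      t ⟨i.1, Finset.mem_range.2 (Finset.mem_Ico.1 i.2).2⟩), ?_, ?_⟩
  · intro x hx
    simp only [Set.mem_setOf_eq, Finset.mem_image]
    refine ⟨res l x, ?_, rfl⟩
    rw [hT]
    exact (Set.Finite.mem_toFinset _).2 ⟨x, hx, rfl⟩
  · exact le_trans (Nat.mul_le_mul_right _ Finset.card_image_le) hNk

lemma combined_cover (μ : Measure (ℕ → Bool)) (hμ : IsFairCoin μ)
    (F : ℕ → Set (ℕ → Bool)) (hF : ∀ n, IsClosed (F n) ∧ μ (F n) = 0) :
    ∀ k n : ℕ, ∃ l, k < l ∧ ∃ φ : Finset (↥(Finset.Ico k l) → Bool),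
      (∀ m ≤ n, F m ⊆ {x | (fun i : ↥(Finset.Ico k l) => x i.1) ∈ φ}) ∧
      φ.card * 4 ^ n ≤ 2 ^ (l - k) := by
  classical
  intro k n
  have hev : ∀ᶠ l in atTop, (k < l ∧ ∀ m ∈ Finset.range (n+1),
      ∃ φm : Finset (↥(Finset.Ico k l) → Bool),
        (F m ⊆ {x | (fun i : ↥(Finset.Ico k l) => x i.1) ∈ φm}) ∧
        φm.card * 2 ^ (2*n + (n+1)) ≤ 2 ^ (l - k)) := by
    refine (eventually_gt_atTop k).and ?_
    rw [Filter.eventually_all_finset]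
    intro m _
    exact closedNull_cover μ hμ (F m) (hF m).1 (hF m).2 k (2*n+(n+1))
  obtain ⟨l, hkl, hall⟩ := hev.exists
  have hall' : ∀ m : ℕ, ∃ φm : Finset (↥(Finset.Ico k l) → Bool),
      m ∈ Finset.range (n+1) →
        (F m ⊆ {x | (fun i : ↥(Finset.Ico k l) => x i.1) ∈ φm}) ∧
        φm.card * 2 ^ (2*n+(n+1)) ≤ 2 ^ (l-k) := by
    intro m
    by_cases hm : m ∈ Finset.range (n+1)
    · obtain ⟨φm, h1, h2⟩ := hall m hm
      exact ⟨φm, fun _ => ⟨h1, h2⟩⟩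
    · exact ⟨∅, fun h => absurd h hm⟩
  choose φf hφf using hall'
  refine ⟨l, hkl, (Finset.range (n+1)).biUnion φf, ?_, ?_⟩
  · intro m hm x hx
    have h := (hφf m (Finset.mem_range.2 (Nat.lt_succ_of_le hm))).1 hx
    simp only [Set.mem_setOf_eq, Finset.mem_biUnion]
    exact ⟨m, Finset.mem_range.2 (Nat.lt_succ_of_le hm), h⟩
  · have hcard : ((Finset.range (n+1)).biUnion φf).card
        ≤ ∑ m ∈ Finset.range (n+1), (φf m).card := Finset.card_biUnion_le
    have hsum : (∑ m ∈ Finset.range (n+1), (φf m).card) * 2^(2*n+(n+1))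
        ≤ (n+1) * 2^(l-k) := by
      rw [Finset.sum_mul]
      calc ∑ m ∈ Finset.range (n+1), (φf m).card * 2^(2*n+(n+1))
          ≤ ∑ m ∈ Finset.range (n+1), 2^(l-k) :=
            Finset.sum_le_sum (fun m hm => (hφf m hm).2)
      _ = (n+1) * 2^(l-k) := by simp [Finset.sum_const, Finset.card_range]
    have h4 : (4:ℕ)^n = 2^(2*n) := by
      rw [show (4:ℕ) = 2^2 by norm_num, ← pow_mul]
    have hpow : (4:ℕ)^n * 2^(n+1) = 2^(2*n+(n+1)) := by
      rw [h4, ← pow_add]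
    have h2 : ((Finset.range (n+1)).biUnion φf).card * 4^n * 2^(n+1)
        ≤ 2^(l-k) * 2^(n+1) := by
      calc ((Finset.range (n+1)).biUnion φf).card * 4^n * 2^(n+1)
          = ((Finset.range (n+1)).biUnion φf).card * 2^(2*n+(n+1)) := by
            rw [mul_assoc, hpow]
      _ ≤ (∑ m ∈ Finset.range (n+1), (φf m).card) * 2^(2*n+(n+1)) :=
            Nat.mul_le_mul_right _ hcard
      _ ≤ (n+1) * 2^(l-k) := hsum
      _ ≤ 2^(n+1) * 2^(l-k) := Nat.mul_le_mul_right _ (le_of_lt (Nat.lt_two_pow_self (n := n+1)))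
      _ = 2^(l-k) * 2^(n+1) := mul_comm _ _
    exact Nat.le_of_mul_le_mul_right h2 (Nat.two_pow_pos (n+1))

theorem E_set_covered_by_small_sets (μ : Measure (ℕ → Bool)) (hμ : IsFairCoin μ)
    (C : Set (ℕ → Bool)) (hC : C ∈ closedNullIdeal μ) :
    ∃ k : ℕ → ℕ, k 0 = 0 ∧ StrictMono k ∧
      ∃ φ : (n : ℕ) → Finset ((Finset.Ico (k n) (k (n+1))) → Bool),
        (∀ n, (φ n).card * 4 ^ n ≤ 2 ^ (k (n+1) - k n)) ∧
        C ⊆ {x : ℕ → Bool |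
          ∀ᶠ n in atTop, (fun i : (Finset.Ico (k n) (k (n+1))) => x i.1) ∈ φ n} := by

  obtain ⟨F, hF, hCF⟩ := hC
  have hcomb := combined_cover μ hμ F hF
  choose L hL φf hcov hbd using hcomb
  refine ⟨fun n => Nat.rec (motive := fun _ => ℕ) 0 (fun m km => L km m) n, rfl,
    strictMono_nat_of_lt_succ (fun n => hL _ n), fun n => φf _ n,
    fun n => hbd _ n, ?_⟩
  intro x hx
  obtain ⟨m, hm⟩ : ∃ m, x ∈ F m := by
    simpa using hCF hx
  simp only [Set.mem_setOf_eq]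
  rw [Filter.eventually_atTop]
  exact ⟨m, fun n hn => hcov _ n m hn hm⟩
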